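/- Let t ≤ n be nonnegative integers and let f be a real-valued function on the subsets of {1,…,n} that is a null t-design and is not identically zero. Then the positive support of f has cardinality at least 2^t: |{F ⊆ {1,…,n} : f(F) > 0}| ≥ 2^t. -/

import Mathlib

open Finset

section aux

variable {α : Type*} [DecidableEq α]

/-- Sets `F ⊆ S` with `q F` and `i ∈ F` correspond to sets `G ⊆ S.erase i` with
`q (insert i G)` via `insert i`. Summation version. -/
lemma nulldesign_sum_insert (S : Finset α) {i : α} (hi : i ∈ S) (q : Finset α → Prop)
    [DecidablePred q] (f : Finset α → ℝ) :
    ∑ F ∈ S.powerset.filter (fun F => q F ∧ i ∈ F), f F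
      = ∑ G ∈ (S.erase i).powerset.filter (fun G => q (insert i G)), f (insert i G) := by
  refine Finset.sum_nbij' (fun F => F.erase i) (fun G => insert i G) ?_ ?_ ?_ ?_ ?_
  · intro F hF
    simp only [mem_filter, mem_powerset] at hF ⊢
    obtain ⟨hFS, hq, hiF⟩ := hF
    exact ⟨erase_subset_erase _ hFS, by rw [insert_erase hiF]; exact hq⟩
  · intro G hG
    simp only [mem_filter, mem_powerset] at hG ⊢
    obtain ⟨hGS, hq⟩ := hG
    exact ⟨insert_subset hi (hGS.trans (erase_subset _ _)), hq, mem_insert_self _ _⟩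
  · intro F hF
    simp only [mem_filter, mem_powerset] at hF
    exact insert_erase hF.2.2
  · intro G hG
    simp only [mem_filter, mem_powerset] at hG
    exact erase_insert (fun h => (mem_erase.mp (hG.1 h)).1 rfl)
  · intro F hF
    simp only [mem_filter, mem_powerset] at hF
    rw [insert_erase hF.2.2]

/-- Cardinality version of the above correspondence. -/
lemma nulldesign_card_insert (S : Finset α) {i : α} (hi : i ∈ S) (q : Finset α → Prop)
    [DecidablePred q] :
    (S.powerset.filter (fun F => q F ∧ i ∈ F)).card
      = ((S.erase i).powerset.filter (fun G => q (insert i G))).card := by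
  refine Finset.card_nbij' (fun F => F.erase i) (fun G => insert i G) ?_ ?_ ?_ ?_
  · intro F hF
    simp only [mem_coe, mem_filter, mem_powerset] at hF ⊢
    obtain ⟨hFS, hq, hiF⟩ := hF
    exact ⟨erase_subset_erase _ hFS, by rw [insert_erase hiF]; exact hq⟩
  · intro G hG
    simp only [mem_coe, mem_filter, mem_powerset] at hG ⊢
    obtain ⟨hGS, hq⟩ := hG
    exact ⟨insert_subset hi (hGS.trans (erase_subset _ _)), hq, mem_insert_self _ _⟩
  · intro F hF
    simp only [mem_coe, mem_filter, mem_powerset] at hF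
    exact insert_erase hF.2.2
  · intro G hG
    simp only [mem_coe, mem_filter, mem_powerset] at hG
    exact erase_insert (fun h => (mem_erase.mp (hG.1 h)).1 rfl)

/-- The sets `F ⊆ S` with `q F` and `i ∉ F` are exactly the subsets of `S.erase i` with `q F`. -/
lemma nulldesign_filter_not_mem (S : Finset α) (i : α) (q : Finset α → Prop) [DecidablePred q] :
    S.powerset.filter (fun F => q F ∧ i ∉ F)
      = (S.erase i).powerset.filter (fun G => q G) := by
  ext F
  simp only [mem_filter, mem_powerset, subset_erase]
  tauto

/-- If the null-design condition holds for all subsets `X ⊆ S`, then `f` vanishes on all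
subsets of `S`. -/
lemma nulldesign_zero_of_full (S : Finset α) (f : Finset α → ℝ)
    (hdes : ∀ X ∈ S.powerset, ∑ F ∈ S.powerset.filter (fun F => X ⊆ F), f F = 0) :
    ∀ F ∈ S.powerset, f F = 0 := by
  intro F hF
  have hFS0 : F ⊆ S := mem_powerset.mp hF
  refine Finset.strongDownwardInductionOn (n := S.card)
    (p := fun F => F ⊆ S → f F = 0) F ?_ (card_le_card hFS0) hFS0
  intro F IH _ hFS
  have h0 := hdes F (mem_powerset.mpr hFS)
  have hFmem : F ∈ S.powerset.filter (fun G => F ⊆ G) := by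
    simp [mem_filter, mem_powerset, hFS]
  rw [← Finset.add_sum_erase _ f hFmem] at h0
  have hrest : ∑ G ∈ (S.powerset.filter (fun G => F ⊆ G)).erase F, f G = 0 := by
    apply Finset.sum_eq_zero
    intro G hG
    simp only [mem_erase, mem_filter, mem_powerset] at hG
    obtain ⟨hne, hGS, hFG⟩ := hG
    exact IH (card_le_card hGS) (Finset.ssubset_iff_subset_ne.mpr ⟨hFG, Ne.symm hne⟩) hGS
  linarith

/-- Main lemma: a nonzero null `t`-design on the subsets of a finite set `S` has positive
support of size at least `2^t`. -/
lemma nulldesign_main (S : Finset α) : ∀ (t : ℕ), t ≤ S.card → ∀ f : Finset α → ℝ,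
    (∀ X ∈ S.powerset, X.card ≤ t → ∑ F ∈ S.powerset.filter (fun F => X ⊆ F), f F = 0) →
    (∃ F ∈ S.powerset, f F ≠ 0) →
    2 ^ t ≤ (S.powerset.filter (fun F => 0 < f F)).card := by
  induction S using Finset.strongInductionOn with
  | _ S IH =>
    intro t ht f hdes hne
    obtain ⟨F₀, hF₀S, hF₀⟩ := hne
    cases t with
    | zero =>
      -- need one positive value
      simp only [pow_zero, Nat.one_le_iff_ne_zero, ← Nat.pos_iff_ne_zero, card_pos]
      by_contra hempty
      rw [not_nonempty_iff_eq_empty, filter_eq_empty_iff] at hempty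
      have hsum := hdes ∅ (by simp) (by simp)
      have : ∀ F ∈ S.powerset.filter (fun F => (∅ : Finset α) ⊆ F), f F ≤ 0 := by
        intro F hF
        have := hempty (mem_filter.mp hF).1
        linarith [not_lt.mp this]
      have hall := (Finset.sum_eq_zero_iff_of_nonpos this).mp hsum
      exact hF₀ (hall F₀ (by simp [mem_filter, mem_powerset.mp hF₀S]))
    | succ s =>
      -- find a nonempty H ⊆ S with f H ≠ 0
      have hexH : ∃ H ∈ S.powerset, H.Nonempty ∧ f H ≠ 0 := by
        by_contra h
        push_neg at h
        have hzero : ∀ H ∈ S.powerset, H.Nonempty → f H = 0 := by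
          intro H hH hne'
          by_contra hfH
          exact hfH (by_contra fun _ => hfH (not_not.mp (fun hx => hx (h H hH hne'))))
        -- so F₀ = ∅ and f ∅ ≠ 0
        have hF₀empty : F₀ = ∅ := by
          by_contra hne'
          exact hF₀ (hzero F₀ hF₀S (nonempty_iff_ne_empty.mpr hne'))
        have hsum := hdes ∅ (by simp) (by simp)
        have : ∑ F ∈ S.powerset.filter (fun F => (∅ : Finset α) ⊆ F), f F = f ∅ := by
          apply Finset.sum_eq_single_of_mem
          · simp
          · intro G hG hGne
            exact hzero G (mem_filter.mp hG).1 (nonempty_iff_ne_empty.mpr hGne)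
        rw [this] at hsum
        exact hF₀ (hF₀empty ▸ hsum)
      obtain ⟨H, hHS, ⟨i, hiH⟩, hH⟩ := hexH
      have hiS : i ∈ S := mem_powerset.mp hHS hiH
      set S' := S.erase i with hS'
      have hS'card : S'.card = S.card - 1 := card_erase_of_mem hiS
      have hS'ss : S' ⊂ S := erase_ssubset hiS
      set f1 : Finset α → ℝ := fun G => f (insert i G) with hf1
      -- f1 is nonzero on powerset S'
      have hf1ne : ∃ G ∈ S'.powerset, f1 G ≠ 0 := by
        refine ⟨H.erase i, mem_powerset.mpr (erase_subset_erase _ (mem_powerset.mp hHS)), ?_⟩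
        simpa [hf1, insert_erase hiH] using hH
      -- subset transfer: X ⊆ S' means i ∉ X and X ⊆ S
      -- key: for X ⊆ S', X ⊆ insert i G ↔ X ⊆ G when i ∉ X
      have hXins : ∀ X : Finset α, X ⊆ S' → ∀ G : Finset α, (X ⊆ insert i G ↔ X ⊆ G) := by
        intro X hX G
        have hiX : i ∉ X := fun h => (mem_erase.mp (hX h)).1 rfl
        constructor
        · intro h x hx
          rcases mem_insert.mp (h hx) with h' | h'
          · exact absurd (h' ▸ hx) hiX
          · exact h'
        · exact fun h => h.trans (subset_insert _ _)
      -- sum over i-containing sets = design sum at insert i X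
      have hsum1 : ∀ X : Finset α, X ⊆ S' → X.card ≤ s →
          ∑ G ∈ S'.powerset.filter (fun G => X ⊆ G), f1 G = 0 := by
        intro X hX hXc
        have hiX : i ∉ X := fun h => (mem_erase.mp (hX h)).1 rfl
        have h1 : ∑ G ∈ S'.powerset.filter (fun G => (insert i X) ⊆ insert i G),
            f (insert i G) = 0 := by
          rw [← nulldesign_sum_insert S hiS (fun F => insert i X ⊆ F) f]
          have : S.powerset.filter (fun F => insert i X ⊆ F ∧ i ∈ F)
              = S.powerset.filter (fun F => insert i X ⊆ F) := by
            apply filter_congr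
            intro F _
            constructor
            · exact fun h => h.1
            · intro h; exact ⟨h, h (mem_insert_self _ _)⟩
          rw [this]
          exact hdes (insert i X) (mem_powerset.mpr (insert_subset hiS
            ((hX.trans (erase_subset _ _))))) (by
              rw [card_insert_of_notMem hiX]; omega)
        rw [← h1]
        apply Finset.sum_congr _ (fun _ _ => rfl)
        apply filter_congr
        intro G hG
        have hiG : i ∉ G := fun h => (mem_erase.mp ((mem_powerset.mp hG) h)).1 rfl
        simp only [insert_subset_iff, mem_insert_self, true_and]
        exact (hXins X hX G).symm
      by_cases h0 : ∀ G ∈ S'.powerset, f G = 0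
      · -- f vanishes on i-free sets: f1 is a null (s+1)-design on S'
        have hinto : ∀ G ∈ S'.powerset.filter (fun G => 0 < f1 G),
            insert i G ∈ S.powerset.filter (fun F => 0 < f F) := by
          intro G hG
          simp only [mem_filter, mem_powerset] at hG ⊢
          exact ⟨insert_subset hiS (hG.1.trans (erase_subset _ _)), hG.2⟩
        have hinj : Set.InjOn (insert i)
            ((S'.powerset.filter (fun G => 0 < f1 G) : Finset (Finset α)) : Set (Finset α)) := by
          intro a ha b hb hab
          simp only [coe_filter, Set.mem_setOf_eq, mem_powerset] at ha hb
          have hia : i ∉ a := fun h => (mem_erase.mp (ha.1 h)).1 rfl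
          have hib : i ∉ b := fun h => (mem_erase.mp (hb.1 h)).1 rfl
          rw [← erase_insert hia, ← erase_insert hib, hab]
        have hcount := Finset.card_le_card_of_injOn (insert i) hinto hinj
        -- f1 is a null (s+1)-design on S'
        have hdes1 : ∀ X ∈ S'.powerset, X.card ≤ s + 1 →
            ∑ G ∈ S'.powerset.filter (fun G => X ⊆ G), f1 G = 0 := by
          intro X hXp hXc
          have hX : X ⊆ S' := mem_powerset.mp hXp
          have hiX : i ∉ X := fun h => (mem_erase.mp (hX h)).1 rfl
          have hd := hdes X (mem_powerset.mpr (hX.trans (erase_subset _ _))) hXc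
          rw [← Finset.sum_filter_add_sum_filter_not (S.powerset.filter (fun F => X ⊆ F))
            (fun F => i ∈ F) f] at hd
          have e1 : (S.powerset.filter (fun F => X ⊆ F)).filter (fun F => i ∈ F)
              = S.powerset.filter (fun F => X ⊆ F ∧ i ∈ F) := by
            rw [filter_filter]
          have e2 : (S.powerset.filter (fun F => X ⊆ F)).filter (fun F => i ∉ F)
              = S'.powerset.filter (fun G => X ⊆ G) := by
            rw [filter_filter]
            exact nulldesign_filter_not_mem S i (fun F => X ⊆ F)
          rw [e1, e2] at hd
          have hz : ∑ G ∈ S'.powerset.filter (fun G => X ⊆ G), f G = 0 := by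
            apply Finset.sum_eq_zero
            intro G hG
            exact h0 G (mem_filter.mp hG).1
          rw [nulldesign_sum_insert S hiS (fun F => X ⊆ F) f, hz, add_zero] at hd
          have e3 : S'.powerset.filter (fun G => X ⊆ insert i G)
              = S'.powerset.filter (fun G => X ⊆ G) :=
            filter_congr (fun G _ => hXins X hX G)
          rw [e3] at hd
          rw [← hd]
        by_cases hts : s + 1 ≤ S'.card
        · exact le_trans (IH S' hS'ss (s + 1) hts f1 hdes1 hf1ne) hcount
        · exfalso
          have hall : ∀ X ∈ S.powerset, ∑ F ∈ S.powerset.filter (fun F => X ⊆ F), f F = 0 := by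
            intro X hX
            refine hdes X hX ?_
            have := card_le_card (mem_powerset.mp hX)
            omega
          exact hF₀ (nulldesign_zero_of_full S f hall F₀ hF₀S)
      · push_neg at h0
        obtain ⟨G₀, hG₀S, hG₀⟩ := h0
        have hsle : s ≤ S'.card := by omega
        have hdes0 : ∀ X ∈ S'.powerset, X.card ≤ s →
            ∑ G ∈ S'.powerset.filter (fun G => X ⊆ G), f G = 0 := by
          intro X hXp hXc
          have hX : X ⊆ S' := mem_powerset.mp hXp
          have hd := hdes X (mem_powerset.mpr (hX.trans (erase_subset _ _))) (by omega)
          rw [← Finset.sum_filter_add_sum_filter_not (S.powerset.filter (fun F => X ⊆ F))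
            (fun F => i ∈ F) f] at hd
          rw [filter_filter, filter_filter,
            nulldesign_filter_not_mem S i (fun F => X ⊆ F)] at hd
          rw [nulldesign_sum_insert S hiS (fun F => X ⊆ F) f] at hd
          have e3 : S'.powerset.filter (fun G => X ⊆ insert i G)
              = S'.powerset.filter (fun G => X ⊆ G) :=
            filter_congr (fun G _ => hXins X hX G)
          rw [e3] at hd
          have h1 : ∑ G ∈ S'.powerset.filter (fun G => X ⊆ G), f (insert i G) = 0 :=
            hsum1 X hX hXc
          linarith
        have hA := IH S' hS'ss s hsle f hdes0 ⟨G₀, hG₀S, hG₀⟩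
        have hB := IH S' hS'ss s hsle f1
          (fun X hX hXc => hsum1 X (mem_powerset.mp hX) hXc) hf1ne
        have hsplit := Finset.card_filter_add_card_filter_not
          (s := S.powerset.filter (fun F => 0 < f F)) (fun F => i ∈ F)
        rw [filter_filter, filter_filter] at hsplit
        have hc1 : (S.powerset.filter (fun F => 0 < f F ∧ i ∈ F)).card
            = (S'.powerset.filter (fun G => 0 < f1 G)).card := by
          rw [nulldesign_card_insert S hiS (fun F => 0 < f F)]
        have hc2 : (S.powerset.filter (fun F => 0 < f F ∧ ¬ i ∈ F)).card
            = (S'.powerset.filter (fun G => 0 < f G)).card := by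
          rw [nulldesign_filter_not_mem S i (fun F => 0 < f F)]
        have hpow : (2 : ℕ) ^ (s + 1) = 2 ^ s + 2 ^ s := by ring
        omega

end aux

/-- If `f` is a real-valued null `t`-design on subsets of `{1,…,n}` that is not
identically zero, then its positive support has cardinality at least `2^t`. -/
theorem stmt_5 (n t : ℕ) (htn : t ≤ n) (f : Finset (Fin n) → ℝ)
    (hdes : ∀ X : Finset (Fin n), X.card ≤ t →
      ∑ F ∈ Finset.univ.filter (fun F : Finset (Fin n) => X ⊆ F), f F = 0)
    (hne : f ≠ 0) :
    2 ^ t ≤ (Finset.univ.filter (fun F : Finset (Fin n) => 0 < f F)).card := by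
  have hne' : ∃ F ∈ (Finset.univ : Finset (Fin n)).powerset, f F ≠ 0 := by
    by_contra h
    push_neg at h
    exact hne (funext fun F => h F (Finset.mem_powerset.mpr (Finset.subset_univ _)))
  have h := nulldesign_main (Finset.univ : Finset (Fin n)) t
    (by simpa using htn) f
    (by
      intro X _ hXc
      rw [Finset.powerset_univ]
      exact hdes X hXc) hne'
  rwa [Finset.powerset_univ] at h
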